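/- Let 𝔄 ⊂ 𝔓 be an antichain, i.e. no two distinct tiles of 𝔄 are comparable under <. If C_M ∈ (0,∞) satisfies ‖M^K f‖_{L²(𝕋^𝐝)} ≤ C_M ‖f‖_{L²(𝕋^𝐝)} for all f ∈ L²(𝕋^𝐝), then ‖T_𝔄 f‖_{L²(𝕋^𝐝)} ≤ C C_M ‖f‖_{L²(𝕋^𝐝)} for all f ∈ L²(𝕋^𝐝), where C depends only on α, 𝐝 and d. -/

import Mathlib

open MeasureTheory Set
open scoped ENNReal NNReal BigOperators

noncomputable section

/-- Euclidean norm on `Fin dd → ℝ`. -/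
def euclNorm {dd : ℕ} (x : Fin dd → ℝ) : ℝ := Real.sqrt (∑ i, (x i) ^ 2)

/-- Anisotropic dilation `δ_r`. -/
def dil {dd : ℕ} (α : Fin dd → ℕ) (r : ℝ) (x : Fin dd → ℝ) : Fin dd → ℝ :=
  fun i => r ^ (α i) * x i

/-- Anisotropic distance function `ρ`. -/
def rho {dd : ℕ} (α : Fin dd → ℕ) (x : Fin dd → ℝ) : ℝ :=
  sInf {r : ℝ | 0 < r ∧ euclNorm (dil α r⁻¹ x) ≤ 1}

/-- `|α| = Σ αᵢ`. -/
def absA {dd : ℕ} (α : Fin dd → ℕ) : ℕ := ∑ i, α i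

/-- The space `𝒬` of real polynomials of degree at most `d` without constant term. -/
def QSpace (dd d : ℕ) : Set (MvPolynomial (Fin dd) ℝ) :=
  {Q | Q.totalDegree ≤ d ∧ MvPolynomial.coeff 0 Q = 0}

/-- `‖Q‖_I`. -/
def qnorm {dd : ℕ} (Q : MvPolynomial (Fin dd) ℝ) (I : Set (Fin dd → ℝ)) : ℝ :=
  ⨆ x ∈ I, ⨆ y ∈ I, |MvPolynomial.eval x Q - MvPolynomial.eval y Q|

/-- `B_I(Q, r)`. -/
def qball {dd : ℕ} (d : ℕ) (I : Set (Fin dd → ℝ)) (Q : MvPolynomial (Fin dd) ℝ) (r : ℝ) :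
    Set (MvPolynomial (Fin dd) ℝ) :=
  {Q' ∈ QSpace dd d | qnorm (Q' - Q) I ≤ r}

/-- Fundamental domain `[-1/2, 1/2)^dd` of the torus. -/
def cube (dd : ℕ) : Set (Fin dd → ℝ) := {x | ∀ i, -(1/2 : ℝ) ≤ x i ∧ x i < 1/2}

/-- `ℤ^dd`-periodicity. -/
def PeriodicZ {dd : ℕ} {E : Type*} (f : (Fin dd → ℝ) → E) : Prop :=
  ∀ (k : Fin dd → ℤ) (x : Fin dd → ℝ), f (x + fun i => (k i : ℝ)) = f x

/-- Torus measure. -/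
def μT (dd : ℕ) : Measure (Fin dd → ℝ) := volume.restrict (cube dd)

/-- An anisotropic `D`-adic cube, given by its scale `s` and position `k`. -/
structure DCube (dd : ℕ) where
  s : ℤ
  k : Fin dd → ℤ

/-- The cube `x + δ_{D^s}([0,1)^dd)` with `x = δ_{D^s}(k)`, as a subset of `ℝ^dd`. -/
def DCube.toSet {dd : ℕ} (α : Fin dd → ℕ) (D : ℕ) (J : DCube dd) : Set (Fin dd → ℝ) :=
  {x | ∀ i, (D : ℝ) ^ (J.s * (α i : ℤ)) * J.k i ≤ x i ∧
            x i < (D : ℝ) ^ (J.s * (α i : ℤ)) * (J.k i + 1)}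

/-- Membership in the grid `𝒟`: nonpositive scale and base point in `[0,1)^dd`. -/
def DCube.valid {dd : ℕ} (α : Fin dd → ℕ) (D : ℕ) (J : DCube dd) : Prop :=
  J.s ≤ 0 ∧ ∀ i, 0 ≤ J.k i ∧ (D : ℝ) ^ (J.s * (α i : ℤ)) * J.k i < 1

/-- `I*`: the union of `I` and its neighbours. -/
def DCube.star {dd : ℕ} (α : Fin dd → ℕ) (D : ℕ) (J : DCube dd) : Set (Fin dd → ℝ) :=
  {x | ∀ i, (D : ℝ) ^ (J.s * (α i : ℤ)) * (J.k i - 1) ≤ x i ∧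
            x i < (D : ℝ) ^ (J.s * (α i : ℤ)) * (J.k i + 2)}

/-- A tile. -/
structure Tile (dd : ℕ) where
  I : DCube dd
  Q : Set (MvPolynomial (Fin dd) ℝ)
  c : MvPolynomial (Fin dd) ℝ

/-- The defining conditions of a tile. -/
def IsTile {dd : ℕ} (α : Fin dd → ℕ) (D d : ℕ) (s_min s_max : ℤ) (p : Tile dd) : Prop :=
  p.I.valid α D ∧ s_min ≤ p.I.s ∧ p.I.s ≤ s_max ∧ p.c ∈ p.Q ∧
  qball d (p.I.toSet α D) p.c 0.2 ⊆ p.Q ∧ p.Q ⊆ qball d (p.I.toSet α D) p.c 1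

/-- The order `𝔭 ≤ 𝔭'` on tiles. -/
def Tile.le {dd : ℕ} (α : Fin dd → ℕ) (D : ℕ) (p p' : Tile dd) : Prop :=
  p.I.toSet α D ⊆ p'.I.toSet α D ∧ p'.Q ⊆ p.Q

/-- The strict order `𝔭 < 𝔭'` on tiles. -/
def Tile.lt {dd : ℕ} (α : Fin dd → ℕ) (D : ℕ) (p p' : Tile dd) : Prop :=
  Tile.le α D p p' ∧ p.I.toSet α D ≠ p'.I.toSet α D

/-- The standing hypotheses on the collection `𝔓` of all tiles. -/
def GoodCollection {dd : ℕ} (α : Fin dd → ℕ) (D d : ℕ) (s_min s_max : ℤ)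
    (𝔓 : Set (Tile dd)) : Prop :=
  (∀ p ∈ 𝔓, IsTile α D d s_min s_max p) ∧
  (∀ I : DCube dd, I.valid α D → s_min ≤ I.s → I.s ≤ s_max →
    ∀ Q ∈ QSpace dd d, ∃ p ∈ 𝔓, p.I = I ∧ Q ∈ p.Q) ∧
  (∀ p ∈ 𝔓, ∀ p' ∈ 𝔓, p.I = p'.I → p ≠ p' → p.Q ∩ p'.Q = ∅) ∧
  (∀ p ∈ 𝔓, ∀ p' ∈ 𝔓, p.I.toSet α D ⊆ p'.I.toSet α D → p.Q ∩ p'.Q = ∅ ∨ p'.Q ⊆ p.Q)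

/-- The conditions on the kernels `K_s`. -/
def KsCond {dd : ℕ} (α : Fin dd → ℕ) (D : ℕ) (A : ℝ) (s_min s_max : ℤ)
    (Ks : ℤ → (Fin dd → ℝ) → ℂ) : Prop :=
  ∀ s : ℤ, s_min ≤ s → s ≤ s_max →
    (∀ x, ‖Ks s x‖ ≤ A * (D : ℝ) ^ (-(s * (absA α : ℤ)))) ∧
    (∀ x x', ‖Ks s x - Ks s x'‖ ≤
        A * rho α (x - x') / (D : ℝ) ^ (s * (1 + (absA α : ℤ)))) ∧
    (∀ x, Ks s x ≠ 0 → (D : ℝ) ^ (s - 1) / 8 ≤ rho α x ∧ rho α x ≤ (D : ℝ) ^ s / 4)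

/-- The conditions on the stopping functions. -/
def GoodStopping {dd : ℕ} (d : ℕ) (s_min s_max : ℤ)
    (Qx : (Fin dd → ℝ) → MvPolynomial (Fin dd) ℝ) (σ1 σ2 : (Fin dd → ℝ) → ℤ) : Prop :=
  (∀ x, Qx x ∈ QSpace dd d) ∧ (Set.range Qx).Finite ∧
  (∀ x, s_min ≤ σ1 x ∧ σ1 x ≤ σ2 x ∧ σ2 x ≤ s_max) ∧
  (Set.range σ1).Finite ∧ (Set.range σ2).Finite

/-- `E(𝔭)`. -/
def Etile {dd : ℕ} (α : Fin dd → ℕ) (D : ℕ)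
    (Qx : (Fin dd → ℝ) → MvPolynomial (Fin dd) ℝ) (σ1 σ2 : (Fin dd → ℝ) → ℤ)
    (p : Tile dd) : Set (Fin dd → ℝ) :=
  {x | x ∈ p.I.toSet α D ∧ Qx x ∈ p.Q ∧ σ1 x ≤ p.I.s ∧ p.I.s ≤ σ2 x}

/-- `Ē(a𝔭')`. -/
def EbarA {dd : ℕ} (α : Fin dd → ℕ) (D d : ℕ)
    (Qx : (Fin dd → ℝ) → MvPolynomial (Fin dd) ℝ) (p' : Tile dd) (a : ℝ) :
    Set (Fin dd → ℝ) :=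
  {x | x ∈ p'.I.toSet α D ∧ Qx x ∈ qball d (p'.I.toSet α D) p'.c a}

/-- The tile operator `T_𝔭`. -/
def Ttile {dd : ℕ} (α : Fin dd → ℕ) (D : ℕ) (Ks : ℤ → (Fin dd → ℝ) → ℂ)
    (Qx : (Fin dd → ℝ) → MvPolynomial (Fin dd) ℝ) (σ1 σ2 : (Fin dd → ℝ) → ℤ)
    (p : Tile dd) (f : (Fin dd → ℝ) → ℂ) (x : Fin dd → ℝ) : ℂ :=
  Set.indicator (Etile α D Qx σ1 σ2 p)
    (fun x => ∫ y in {y | y - x ∈ cube dd},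
      Ks p.I.s (x - y) *
        Complex.exp (Complex.I *
          ((MvPolynomial.eval x (Qx x) - MvPolynomial.eval y (Qx x) : ℝ) : ℂ)) * f y) x

/-- The adjoint tile operator `T_𝔭^*`. -/
def TtileStar {dd : ℕ} (α : Fin dd → ℕ) (D : ℕ) (Ks : ℤ → (Fin dd → ℝ) → ℂ)
    (Qx : (Fin dd → ℝ) → MvPolynomial (Fin dd) ℝ) (σ1 σ2 : (Fin dd → ℝ) → ℤ)
    (p : Tile dd) (g : (Fin dd → ℝ) → ℂ) (y : Fin dd → ℝ) : ℂ :=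
  ∫ x in {x | x - y ∈ cube dd},
    Complex.exp (Complex.I *
        ((MvPolynomial.eval y (Qx x) - MvPolynomial.eval x (Qx x) : ℝ) : ℂ)) *
      (starRingEnd ℂ) (Ks p.I.s (x - y)) *
      Set.indicator (Etile α D Qx σ1 σ2 p) g x

/-- `T_𝔖 = Σ_{𝔭 ∈ 𝔖} T_𝔭`. -/
def Tsum {dd : ℕ} (α : Fin dd → ℕ) (D : ℕ) (Ks : ℤ → (Fin dd → ℝ) → ℂ)
    (Qx : (Fin dd → ℝ) → MvPolynomial (Fin dd) ℝ) (σ1 σ2 : (Fin dd → ℝ) → ℤ)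
    (𝔖 : Set (Tile dd)) (f : (Fin dd → ℝ) → ℂ) (x : Fin dd → ℝ) : ℂ :=
  ∑ᶠ p ∈ 𝔖, Ttile α D Ks Qx σ1 σ2 p f x

/-- `T_𝔖^* = Σ_{𝔭 ∈ 𝔖} T_𝔭^*`. -/
def TsumStar {dd : ℕ} (α : Fin dd → ℕ) (D : ℕ) (Ks : ℤ → (Fin dd → ℝ) → ℂ)
    (Qx : (Fin dd → ℝ) → MvPolynomial (Fin dd) ℝ) (σ1 σ2 : (Fin dd → ℝ) → ℤ)
    (𝔖 : Set (Tile dd)) (g : (Fin dd → ℝ) → ℂ) (y : Fin dd → ℝ) : ℂ :=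
  ∑ᶠ p ∈ 𝔖, TtileStar α D Ks Qx σ1 σ2 p g y

/-- The maximal average `M^K`. -/
def MKT {dd : ℕ} (s_min s_max : ℤ) (Ks : ℤ → (Fin dd → ℝ) → ℂ)
    (f : (Fin dd → ℝ) → ℂ) (x : Fin dd → ℝ) : ℝ≥0∞ :=
  ⨆ s : ℤ, ⨆ _ : s_min ≤ s ∧ s ≤ s_max,
    ∫⁻ y in {y | y - x ∈ cube dd}, (‖Ks s (x - y)‖₊ : ℝ≥0∞) * (‖f y‖₊ : ℝ≥0∞)

/-- The maximally truncated singular integral `R^K`. -/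
def RKT {dd : ℕ} (s_min s_max : ℤ) (Ks : ℤ → (Fin dd → ℝ) → ℂ)
    (f : (Fin dd → ℝ) → ℂ) (x : Fin dd → ℝ) : ℝ≥0∞ :=
  ⨆ σa : ℤ, ⨆ σb : ℤ, ⨆ _ : s_min ≤ σa ∧ σa ≤ σb ∧ σb ≤ s_max,
    ENNReal.ofReal
      ‖∑ s ∈ Finset.Icc σa σb, ∫ y in {y | y - x ∈ cube dd}, Ks s (x - y) * f y‖

/-- `L²`-norm on the torus of an `ℝ≥0∞`-valued function. -/
def eL2T {dd : ℕ} (g : (Fin dd → ℝ) → ℝ≥0∞) : ℝ≥0∞ :=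
  (∫⁻ x in cube dd, g x ^ (2:ℝ)) ^ (1/2 : ℝ)

/-- `dim 𝒬 = C(d+dd, dd) - 1`. -/
def dimQ (dd d : ℕ) : ℕ := Nat.choose (d + dd) dd - 1

/-- `a𝔭 ≤ a𝔭'`. -/
def TileLeA {dd : ℕ} (α : Fin dd → ℕ) (D d : ℕ) (a : ℝ) (p p' : Tile dd) : Prop :=
  p.I.toSet α D ⊆ p'.I.toSet α D ∧
  qball d (p'.I.toSet α D) p'.c a ⊆ qball d (p.I.toSet α D) p.c a

/-- The density of a tile. -/
def dens {dd : ℕ} (α : Fin dd → ℕ) (D d : ℕ) (𝔓 : Set (Tile dd))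
    (Qx : (Fin dd → ℝ) → MvPolynomial (Fin dd) ℝ) (p : Tile dd) : ℝ≥0∞ :=
  ⨆ a : ℝ, ⨆ _ : 2 ≤ a, ⨆ p' : Tile dd, ⨆ _ : p' ∈ 𝔓 ∧ TileLeA α D d a p p',
    ENNReal.ofReal (a ^ (-(dimQ dd d : ℝ))) *
      (volume (EbarA α D d Qx p' a) / volume (p'.I.toSet α D))

/-- The density of a collection of tiles. -/
def densS {dd : ℕ} (α : Fin dd → ℕ) (D d : ℕ) (𝔓 : Set (Tile dd))
    (Qx : (Fin dd → ℝ) → MvPolynomial (Fin dd) ℝ) (𝔖 : Set (Tile dd)) : ℝ≥0∞ :=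
  ⨆ p ∈ 𝔖, dens α D d 𝔓 Qx p

/-- `Δ(𝔭, Q) = ‖Q_𝔭 − Q‖_{I_𝔭} + 1`. -/
def ΔT {dd : ℕ} (α : Fin dd → ℕ) (D : ℕ) (p : Tile dd)
    (Q : MvPolynomial (Fin dd) ℝ) : ℝ :=
  qnorm (p.c - Q) (p.I.toSet α D) + 1

/-- `4𝔭 < 𝔭'`. -/
def fourLt {dd : ℕ} (α : Fin dd → ℕ) (D d : ℕ) (p p' : Tile dd) : Prop :=
  p.I.toSet α D ⊆ p'.I.toSet α D ∧ p.I.toSet α D ≠ p'.I.toSet α D ∧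
  p'.Q ⊆ qball d (p.I.toSet α D) p.c 4

/-- A tree with top tile `top`. -/
def IsTree {dd : ℕ} (α : Fin dd → ℕ) (D d : ℕ) (𝔓 𝔗 : Set (Tile dd))
    (top : Tile dd) : Prop :=
  𝔗 ⊆ 𝔓 ∧ top ∈ 𝔓 ∧
  (∀ p p'' p', p ∈ 𝔗 → p' ∈ 𝔗 → p'' ∈ 𝔓 →
    Tile.le α D p p'' → Tile.le α D p'' p' → p'' ∈ 𝔗) ∧
  (∀ p ∈ 𝔗, fourLt α D d p top)

/-- A normal tree. -/
def IsNormalTree {dd : ℕ} (α : Fin dd → ℕ) (D d : ℕ) (𝔓 𝔗 : Set (Tile dd))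
    (top : Tile dd) : Prop :=
  IsTree α D d 𝔓 𝔗 top ∧ ∀ p ∈ 𝔗, p.I.star α D ⊆ top.I.toSet α D

/-- `Δ`-separation of two trees. -/
def Separated {dd : ℕ} (α : Fin dd → ℕ) (D : ℕ) (Δ : ℝ)
    (𝔗₁ : Set (Tile dd)) (t₁ : Tile dd) (𝔗₂ : Set (Tile dd)) (t₂ : Tile dd) : Prop :=
  (∀ p ∈ 𝔗₁, p.I.toSet α D ⊆ t₂.I.toSet α D → Δ < ΔT α D p t₂.c) ∧
  (∀ p ∈ 𝔗₂, p.I.toSet α D ⊆ t₁.I.toSet α D → Δ < ΔT α D p t₁.c)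

end


noncomputable section AuxAntichain

lemma intA' {h : ℝ} (hh : 0 < h) (N k m : ℤ) (x : ℝ)
    (h1 : h * k ≤ x) (h2 : x < h * (k + 1))
    (h3 : h * N * m ≤ x) (h4 : x < h * N * (m + 1)) :
    h * N * m ≤ h * k ∧ h * (k + 1) ≤ h * N * (m + 1) := by
  have e1 : (k : ℝ) < (N : ℝ) * ((m : ℝ) + 1) := by
    have := h1.trans_lt h4
    rw [mul_assoc] at this
    exact (mul_lt_mul_iff_right₀ hh).mp this
  have e2 : (N : ℝ) * (m : ℝ) < (k : ℝ) + 1 := by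
    have := h3.trans_lt h2
    rw [mul_assoc] at this
    exact (mul_lt_mul_iff_right₀ hh).mp this
  have i1 : (k : ℤ) < N * (m + 1) := by exact_mod_cast e1
  have i2 : N * m < k + 1 := by exact_mod_cast e2
  constructor
  · rw [mul_assoc]
    exact (mul_le_mul_iff_right₀ hh).mpr (by exact_mod_cast (by omega : N * m ≤ k))
  · rw [mul_assoc]
    exact (mul_le_mul_iff_right₀ hh).mpr (by exact_mod_cast (by omega : k + 1 ≤ N * (m + 1)))

lemma facA' {D : ℕ} (hD : 1 ≤ D) (a : ℕ) {s s' : ℤ} (hs : s ≤ s') :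
    ∃ N : ℤ, (D:ℝ) ^ (s' * (a:ℤ)) = (D:ℝ) ^ (s * (a:ℤ)) * (N : ℝ) := by
  have hD0 : (0:ℝ) < D := by exact_mod_cast Nat.lt_of_lt_of_le Nat.zero_lt_one hD
  refine ⟨(D:ℤ) ^ ((s' - s) * (a:ℤ)).toNat, ?_⟩
  have hnn : (0:ℤ) ≤ (s' - s) * (a:ℤ) := mul_nonneg (by linarith) (Int.natCast_nonneg _)
  have hcast : (((D:ℤ) ^ ((s' - s) * (a:ℤ)).toNat : ℤ) : ℝ)
      = (D:ℝ) ^ ((s' - s) * (a:ℤ)) := by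
    push_cast
    rw [← zpow_natCast, Int.toNat_of_nonneg hnn]
  rw [hcast, ← zpow_add₀ (ne_of_gt hD0)]
  congr 1
  ring

lemma nest' {dd : ℕ} (α : Fin dd → ℕ) {D : ℕ} (hD : 1 ≤ D) {J J' : DCube dd}
    (hs : J.s ≤ J'.s) {x : Fin dd → ℝ} (hx : x ∈ J.toSet α D) (hx' : x ∈ J'.toSet α D) :
    J.toSet α D ⊆ J'.toSet α D := by
  have hD0 : (0:ℝ) < D := by exact_mod_cast Nat.lt_of_lt_of_le Nat.zero_lt_one hD
  intro y hy i
  obtain ⟨N, hfac⟩ := facA' hD (α i) hs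
  have hh : (0:ℝ) < (D:ℝ) ^ (J.s * (α i : ℤ)) := zpow_pos hD0 _
  have h1 := (hx i).1
  have h2 := (hx i).2
  have h3 := (hx' i).1
  have h4 := (hx' i).2
  have h5 := (hy i).1
  have h6 := (hy i).2
  rw [hfac] at h3 h4 ⊢
  obtain ⟨e1, e2⟩ := intA' hh N (J.k i) (J'.k i) (x i) h1 h2 h3 h4
  exact ⟨le_trans e1 h5, lt_of_lt_of_le h6 e2⟩

lemma same' {dd : ℕ} (α : Fin dd → ℕ) {D : ℕ} (hD : 1 ≤ D) {J J' : DCube dd}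
    (hs : J.s = J'.s) {x : Fin dd → ℝ} (hx : x ∈ J.toSet α D) (hx' : x ∈ J'.toSet α D) :
    J = J' := by
  have hD0 : (0:ℝ) < D := by exact_mod_cast Nat.lt_of_lt_of_le Nat.zero_lt_one hD
  obtain ⟨s, k⟩ := J
  obtain ⟨s', k'⟩ := J'
  simp only at hs
  subst hs
  suffices hk : k = k' by rw [hk]
  funext i
  have hh : (0:ℝ) < (D:ℝ) ^ (s * (α i : ℤ)) := zpow_pos hD0 _
  have h1 := (hx i).1
  have h2 := (hx i).2
  have h3 := (hx' i).1
  have h4 := (hx' i).2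
  simp only [DCube.toSet] at h1 h2 h3 h4
  have e1 : (k i : ℝ) < (k' i : ℝ) + 1 := by
    have := h1.trans_lt h4
    exact (mul_lt_mul_iff_right₀ hh).mp this
  have e2 : (k' i : ℝ) < (k i : ℝ) + 1 := by
    have := h3.trans_lt h2
    exact (mul_lt_mul_iff_right₀ hh).mp this
  have i1 : k i < k' i + 1 := by exact_mod_cast e1
  have i2 : k' i < k i + 1 := by exact_mod_cast e2
  omega

lemma neSet' {dd : ℕ} (hdd : 0 < dd) (α : Fin dd → ℕ) (hα : ∀ i, 0 < α i) {D : ℕ}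
    (hD : 2 ≤ D) {J J' : DCube dd} (hs : J.s < J'.s) {x : Fin dd → ℝ}
    (hx : x ∈ J.toSet α D) (hx' : x ∈ J'.toSet α D) :
    J.toSet α D ≠ J'.toSet α D := by
  have hD1 : 1 ≤ D := le_trans (by norm_num) hD
  have hD0 : (0:ℝ) < D := by exact_mod_cast Nat.lt_of_lt_of_le Nat.zero_lt_one hD1
  have hD1' : (1:ℝ) < D := by exact_mod_cast Nat.lt_of_lt_of_le Nat.one_lt_two hD
  intro heq
  set i : Fin dd := ⟨0, hdd⟩ with hi
  set h : ℝ := (D:ℝ) ^ (J.s * (α i : ℤ)) with hhdef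
  set H : ℝ := (D:ℝ) ^ (J'.s * (α i : ℤ)) with hHdef
  have hh : (0:ℝ) < h := zpow_pos hD0 _
  have hH : (0:ℝ) < H := zpow_pos hD0 _
  have hhH : h < H := by
    apply zpow_lt_zpow_right₀ hD1'
    have := hα i
    exact mul_lt_mul_of_pos_right hs (by exact_mod_cast this)
  obtain ⟨N, hfac⟩ := facA' hD1 (α i) (le_of_lt hs)
  have h1 := (hx i).1
  have h2 := (hx i).2
  have h3 := (hx' i).1
  have h4 := (hx' i).2
  rw [hfac] at h3 h4
  obtain ⟨e1, e2⟩ := intA' hh N (J.k i) (J'.k i) (x i) h1 h2 h3 h4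
  rw [← hfac] at e1 e2
  -- e1 : H * J'.k i ≤ h * J.k i, e2 : h * (J.k i + 1) ≤ H * (J'.k i + 1)
  by_cases hcase : h * (J.k i + 1) < H * (J'.k i + 1)
  · set y : Fin dd → ℝ := Function.update x i (h * (J.k i + 1)) with hy
    have hyJ' : y ∈ J'.toSet α D := by
      intro j
      by_cases hj : j = i
      · subst hj
        rw [hy, Function.update_self]
        constructor
        · calc H * (J'.k i) ≤ h * (J.k i) := e1
            _ ≤ h * (J.k i + 1) := by nlinarith
        · exact hcase
      · rw [hy, Function.update_of_ne hj]
        exact hx' j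
    have hyJ : y ∉ J.toSet α D := by
      intro hyJ
      have := (hyJ i).2
      rw [hy, Function.update_self] at this
      exact lt_irrefl _ this
    exact hyJ (heq ▸ hyJ')
  · have heq2 : h * (J.k i + 1) = H * (J'.k i + 1) := le_antisymm e2 (not_lt.mp hcase)
    set y : Fin dd → ℝ := Function.update x i (H * (J'.k i)) with hy
    have hyJ' : y ∈ J'.toSet α D := by
      intro j
      by_cases hj : j = i
      · subst hj
        rw [hy, Function.update_self]
        exact ⟨le_refl _, by nlinarith⟩
      · rw [hy, Function.update_of_ne hj]
        exact hx' j
    have hyJ : y ∉ J.toSet α D := by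
      intro hyJ
      have := (hyJ i).1
      rw [hy, Function.update_self] at this
      -- this : h * J.k i ≤ H * J'.k i ; but H * J'.k i < h * J.k i
      have hlt : H * (J'.k i) < h * (J.k i) := by nlinarith
      linarith
    exact hyJ (heq ▸ hyJ')

lemma notBoth' {dd : ℕ} (hdd : 0 < dd) (α : Fin dd → ℕ) (hα : ∀ i, 0 < α i) {D : ℕ}
    (hD : 2 ≤ D) {d : ℕ} {s_min s_max : ℤ} {𝔓 : Set (Tile dd)}
    (hGC : GoodCollection α D d s_min s_max 𝔓)
    (Qx : (Fin dd → ℝ) → MvPolynomial (Fin dd) ℝ) (σ1 σ2 : (Fin dd → ℝ) → ℤ)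
    {𝔄 : Set (Tile dd)} (hsub : 𝔄 ⊆ 𝔓)
    (hanti : ∀ p ∈ 𝔄, ∀ p' ∈ 𝔄, ¬ Tile.lt α D p p')
    {p p' : Tile dd} (hp : p ∈ 𝔄) (hp' : p' ∈ 𝔄) (hne : p ≠ p')
    {x : Fin dd → ℝ} (hx : x ∈ Etile α D Qx σ1 σ2 p) (hx' : x ∈ Etile α D Qx σ1 σ2 p') :
    False := by
  have hD1 : 1 ≤ D := le_trans (by norm_num) hD
  have hQmem : Qx x ∈ p.Q ∩ p'.Q := ⟨hx.2.1, hx'.2.1⟩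
  by_cases hI : p.I = p'.I
  · have hempty := hGC.2.2.1 p (hsub hp) p' (hsub hp') hI hne
    exact Set.notMem_empty _ (hempty ▸ hQmem)
  · rcases lt_trichotomy p.I.s p'.I.s with hlt | heqs | hgt
    · have hsubI := nest' α hD1 (le_of_lt hlt) hx.1 hx'.1
      rcases hGC.2.2.2 p (hsub hp) p' (hsub hp') hsubI with hempty | hQ
      · exact Set.notMem_empty _ (hempty ▸ hQmem)
      · exact hanti p hp p' hp' ⟨⟨hsubI, hQ⟩, neSet' hdd α hα hD hlt hx.1 hx'.1⟩
    · exact hI (same' α hD1 heqs hx.1 hx'.1)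
    · have hsubI := nest' α hD1 (le_of_lt hgt) hx'.1 hx.1
      rcases hGC.2.2.2 p' (hsub hp') p (hsub hp) hsubI with hempty | hQ
      · have hQmem' : Qx x ∈ p'.Q ∩ p.Q := ⟨hx'.2.1, hx.2.1⟩
        exact Set.notMem_empty _ (hempty ▸ hQmem')
      · exact hanti p' hp' p hp ⟨⟨hsubI, hQ⟩, neSet' hdd α hα hD hgt hx'.1 hx.1⟩

lemma rho0' (α : Fin 0 → ℕ) (x : Fin 0 → ℝ) : rho α x = 0 := by
  have hset : {r : ℝ | 0 < r ∧ euclNorm (dil α r⁻¹ x) ≤ 1} = Set.Ioi 0 := by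
    ext r
    simp [euclNorm, dil]
  rw [rho, hset, csInf_Ioi]

lemma nnnorm_exp_I_mul_real (r : ℝ) : ‖Complex.exp (Complex.I * r)‖₊ = 1 := by
  have : ‖Complex.exp (Complex.I * r)‖ = 1 := by
    rw [Complex.norm_exp]; simp
  exact NNReal.coe_injective (by simpa using this)

end AuxAntichain

noncomputable section

theorem statement11 (dd d : ℕ) (α : Fin dd → ℕ) (hα : ∀ i, 0 < α i) (hmono : Monotone α) :
    ∃ (C : ℝ) (D₀ : ℕ), 0 < C ∧
      ∀ (D : ℕ), D₀ ≤ D → (∃ k : ℕ, D = 2 ^ k) →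
      ∀ (A : ℝ), 0 < A →
      ∀ (s_min s_max : ℤ), s_min ≤ s_max → s_max ≤ 0 →
      ∀ (Ks : ℤ → (Fin dd → ℝ) → ℂ), KsCond α D A s_min s_max Ks →
      ∀ (𝔓 : Set (Tile dd)), GoodCollection α D d s_min s_max 𝔓 →
      ∀ (Qx : (Fin dd → ℝ) → MvPolynomial (Fin dd) ℝ) (σ1 σ2 : (Fin dd → ℝ) → ℤ),
        GoodStopping d s_min s_max Qx σ1 σ2 →
        (∀ p ∈ 𝔓, MeasurableSet (Etile α D Qx σ1 σ2 p)) →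
      ∀ (𝔄 : Set (Tile dd)), 𝔄 ⊆ 𝔓 → 𝔄.Finite →
        (∀ p ∈ 𝔄, ∀ p' ∈ 𝔄, ¬ Tile.lt α D p p') →
      ∀ (C_M : ℝ), 0 < C_M →
        (∀ f : (Fin dd → ℝ) → ℂ, Measurable f → PeriodicZ f →
          eL2T (MKT s_min s_max Ks f) ≤ ENNReal.ofReal C_M * eLpNorm f 2 (μT dd)) →
      ∀ f : (Fin dd → ℝ) → ℂ, Measurable f → PeriodicZ f →
        eLpNorm (Tsum α D Ks Qx σ1 σ2 𝔄 f) 2 (μT dd) ≤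
          ENNReal.ofReal (C * C_M) * eLpNorm f 2 (μT dd) := by
  refine ⟨1, 2, one_pos, ?_⟩
  intro D hD _ A hA s_min s_max hss hs0 Ks hKs 𝔓 hGC Qx σ1 σ2 hStop hmeas 𝔄 h𝔄P h𝔄fin
    hanti C_M hCM hM f hf hfp
  have hD0 : (0:ℝ) < D := by
    have : (2:ℕ) ≤ D := hD
    exact_mod_cast Nat.lt_of_lt_of_le Nat.zero_lt_two this
  -- pointwise key estimate
  have key : ∀ x, (‖Tsum α D Ks Qx σ1 σ2 𝔄 f x‖₊ : ℝ≥0∞) ≤ MKT s_min s_max Ks f x := by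
    intro x
    rcases Nat.eq_zero_or_pos dd with hdd | hdd
    · -- degenerate case : all kernels vanish
      subst hdd
      have hKzero : ∀ s : ℤ, s_min ≤ s → s ≤ s_max → ∀ z, Ks s z = 0 := by
        intro s hs1 hs2 z
        by_contra hz
        have hsupp := ((hKs s hs1 hs2).2.2 z hz).1
        rw [rho0'] at hsupp
        have : (0:ℝ) < (D:ℝ) ^ (s - 1) / 8 := by positivity
        linarith
      have hzero : Tsum α D Ks Qx σ1 σ2 𝔄 f x = 0 := by
        rw [Tsum, ← h𝔄fin.coe_toFinset, finsum_mem_coe_finset]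
        apply Finset.sum_eq_zero
        intro p hp
        have ht := hGC.1 p (h𝔄P (h𝔄fin.mem_toFinset.1 hp))
        simp [Ttile, hKzero p.I.s ht.2.1 ht.2.2.1]
      rw [hzero]
      simp
    · rw [Tsum, ← h𝔄fin.coe_toFinset, finsum_mem_coe_finset]
      by_cases hex : ∃ p ∈ 𝔄, x ∈ Etile α D Qx σ1 σ2 p
      · obtain ⟨p₀, hp₀, hxE⟩ := hex
        rw [Finset.sum_eq_single_of_mem p₀ (h𝔄fin.mem_toFinset.2 hp₀) (by
          intro p hp hne
          rw [Ttile, Set.indicator_of_notMem]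
          intro hxE'
          exact notBoth' hdd α hα hD hGC Qx σ1 σ2 h𝔄P hanti hp₀
            (h𝔄fin.mem_toFinset.1 hp) (Ne.symm hne) hxE hxE')]
        rw [Ttile, Set.indicator_of_mem hxE]
        have ht := hGC.1 p₀ (h𝔄P hp₀)
        calc (‖∫ y in {y | y - x ∈ cube dd},
              Ks p₀.I.s (x - y) *
                Complex.exp (Complex.I *
                  ((MvPolynomial.eval x (Qx x) - MvPolynomial.eval y (Qx x) : ℝ) : ℂ)) *
                f y‖₊ : ℝ≥0∞)
            ≤ ∫⁻ y in {y | y - x ∈ cube dd},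
                ‖Ks p₀.I.s (x - y) *
                  Complex.exp (Complex.I *
                    ((MvPolynomial.eval x (Qx x) - MvPolynomial.eval y (Qx x) : ℝ) : ℂ)) *
                  f y‖₊ := enorm_integral_le_lintegral_enorm _
          _ = ∫⁻ y in {y | y - x ∈ cube dd},
                (‖Ks p₀.I.s (x - y)‖₊ : ℝ≥0∞) * (‖f y‖₊ : ℝ≥0∞) := by
              apply lintegral_congr
              intro y
              rw [nnnorm_mul, nnnorm_mul, nnnorm_exp_I_mul_real, mul_one]
              push_cast
              ring
          _ ≤ MKT s_min s_max Ks f x := by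
              rw [MKT]
              exact le_iSup_of_le p₀.I.s (le_iSup_of_le ⟨ht.2.1, ht.2.2.1⟩ le_rfl)
      · push_neg at hex
        rw [Finset.sum_eq_zero (by
          intro p hp
          rw [Ttile, Set.indicator_of_notMem (hex p (h𝔄fin.mem_toFinset.1 hp))])]
        simp
  -- conclude via the maximal function bound
  have step1 : eLpNorm (Tsum α D Ks Qx σ1 σ2 𝔄 f) 2 (μT dd)
      ≤ eL2T (MKT s_min s_max Ks f) := by
    rw [eLpNorm_eq_lintegral_rpow_enorm_toReal (by norm_num) (by norm_num), eL2T, μT]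
    have h2 : ((2:ℝ≥0∞)).toReal = (2:ℝ) := by norm_num
    rw [h2]
    apply ENNReal.rpow_le_rpow _ (by norm_num : (0:ℝ) ≤ 1/2)
    apply lintegral_mono
    intro x
    exact ENNReal.rpow_le_rpow (key x) (by norm_num)
  calc eLpNorm (Tsum α D Ks Qx σ1 σ2 𝔄 f) 2 (μT dd)
      ≤ eL2T (MKT s_min s_max Ks f) := step1
    _ ≤ ENNReal.ofReal C_M * eLpNorm f 2 (μT dd) := hM f hf hfp
    _ = ENNReal.ofReal (1 * C_M) * eLpNorm f 2 (μT dd) := by rw [one_mul]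

end
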